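/- If D is a domain in which 2 is a unit, then in R = D[X₁, …, Xₙ] (n ≥ 2) the ideal ⟨X₁⁴, X₁³X₂, X₁²X₂², X₂⁴⟩ factors as ⟨X₁², X₁X₂ + X₂²⟩ · ⟨X₁², X₁X₂ − X₂²⟩; in particular it is not an atom of the monoid of nonzero ideals of R. -/

import Mathlib

open MvPolynomial

lemma c4_key {R : Type*} [CommRing R] (h2 : IsUnit (2 : R)) (x y : R) :
    Ideal.span {x ^ 4, x ^ 3 * y, x ^ 2 * y ^ 2, y ^ 4} =
      Ideal.span {x ^ 2, x * y + y ^ 2} * Ideal.span {x ^ 2, x * y - y ^ 2} := by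
  obtain ⟨u, hu⟩ := h2
  have hinv : (↑u⁻¹ : R) * 2 = 1 := by rw [← hu]; exact u.inv_mul
  apply le_antisymm
  · have m1 : x ^ 2 * x ^ 2 ∈ Ideal.span {x ^ 2, x * y + y ^ 2} * Ideal.span {x ^ 2, x * y - y ^ 2} :=
      Ideal.mul_mem_mul (Ideal.subset_span (by simp)) (Ideal.subset_span (by simp))
    have m2 : x ^ 2 * (x * y + y ^ 2) ∈ Ideal.span {x ^ 2, x * y + y ^ 2} * Ideal.span {x ^ 2, x * y - y ^ 2} := by
      rw [mul_comm]
      exact Ideal.mul_mem_mul (Ideal.subset_span (by simp)) (Ideal.subset_span (by simp))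
    have m3 : x ^ 2 * (x * y - y ^ 2) ∈ Ideal.span {x ^ 2, x * y + y ^ 2} * Ideal.span {x ^ 2, x * y - y ^ 2} :=
      Ideal.mul_mem_mul (Ideal.subset_span (by simp)) (Ideal.subset_span (by simp))
    have m4 : (x * y + y ^ 2) * (x * y - y ^ 2) ∈ Ideal.span {x ^ 2, x * y + y ^ 2} * Ideal.span {x ^ 2, x * y - y ^ 2} :=
      Ideal.mul_mem_mul (Ideal.subset_span (by simp)) (Ideal.subset_span (by simp))
    have mxy : x ^ 2 * y ^ 2 ∈ Ideal.span {x ^ 2, x * y + y ^ 2} * Ideal.span {x ^ 2, x * y - y ^ 2} := by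
      have := Ideal.mul_mem_left _ (↑u⁻¹ : R) (Ideal.sub_mem _ m2 m3)
      rw [show (↑u⁻¹ : R) * (x ^ 2 * (x * y + y ^ 2) - x ^ 2 * (x * y - y ^ 2)) =
          (↑u⁻¹ * 2) * (x ^ 2 * y ^ 2) by ring, hinv, one_mul] at this
      exact this
    rw [Ideal.span_le]
    rintro p hp
    simp only [Set.mem_insert_iff, Set.mem_singleton_iff] at hp
    rcases hp with rfl | rfl | rfl | rfl
    · rw [show x ^ 4 = x ^ 2 * x ^ 2 by ring]; exact m1
    · have := Ideal.mul_mem_left _ (↑u⁻¹ : R) (Ideal.add_mem _ m2 m3)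
      rw [show (↑u⁻¹ : R) * (x ^ 2 * (x * y + y ^ 2) + x ^ 2 * (x * y - y ^ 2)) =
          (↑u⁻¹ * 2) * (x ^ 3 * y) by ring, hinv, one_mul] at this
      exact this
    · exact mxy
    · have := Ideal.sub_mem _ mxy m4
      rw [show x ^ 2 * y ^ 2 - (x * y + y ^ 2) * (x * y - y ^ 2) = y ^ 4 by ring] at this
      exact this
  · rw [Ideal.span_mul_span]
    rw [Ideal.span_le]
    intro p hp
    simp only [Set.mem_mul, Set.mem_iUnion, Set.mem_insert_iff, Set.mem_singleton_iff] at hp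
    obtain ⟨a, (rfl | rfl), b, (rfl | rfl), rfl⟩ := hp
    · rw [show x ^ 2 * x ^ 2 = x ^ 4 by ring]; exact Ideal.subset_span (by simp)
    · rw [show x ^ 2 * (x * y - y ^ 2) = x ^ 3 * y - x ^ 2 * y ^ 2 by ring]
      exact Ideal.sub_mem _ (Ideal.subset_span (by simp)) (Ideal.subset_span (by simp))
    · rw [show (x * y + y ^ 2) * x ^ 2 = x ^ 3 * y + x ^ 2 * y ^ 2 by ring]
      exact Ideal.add_mem _ (Ideal.subset_span (by simp)) (Ideal.subset_span (by simp))
    · rw [show (x * y + y ^ 2) * (x * y - y ^ 2) = x ^ 2 * y ^ 2 - y ^ 4 by ring]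
      exact Ideal.sub_mem _ (Ideal.subset_span (by simp)) (Ideal.subset_span (by simp))

lemma c4_span_ne_top {D : Type*} [CommRing D] [Nontrivial D] {σ : Type*}
    {s : Set (MvPolynomial σ D)} (hs : ∀ p ∈ s, constantCoeff p = 0) :
    Ideal.span s ≠ ⊤ := by
  intro h
  have h1 : (1 : MvPolynomial σ D) ∈ Ideal.span s := h ▸ Submodule.mem_top
  have hle : Ideal.span s ≤ RingHom.ker (constantCoeff (σ := σ) (R := D)) :=
    Ideal.span_le.mpr fun p hp => hs p hp
  have := hle h1
  rw [RingHom.mem_ker, map_one] at this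
  exact one_ne_zero this

/-- If `D` is a domain in which `2` is a unit, then in `R = D[X₁,…,Xₙ]` (`n ≥ 2`) the ideal
`⟨X₁⁴, X₁³X₂, X₁²X₂², X₂⁴⟩` factors as `⟨X₁², X₁X₂ + X₂²⟩ · ⟨X₁², X₁X₂ − X₂²⟩`; in
particular it is not an atom of the monoid of nonzero ideals of `R`. -/
theorem c4_not_atom {D : Type*} [CommRing D] [IsDomain D] (h2 : IsUnit (2 : D))
    (n : ℕ) (hn : 2 ≤ n) :
    (Ideal.span {(X (⟨0, by omega⟩ : Fin n) : MvPolynomial (Fin n) D) ^ 4,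
        (X (⟨0, by omega⟩ : Fin n) : MvPolynomial (Fin n) D) ^ 3 * X ⟨1, by omega⟩,
        (X (⟨0, by omega⟩ : Fin n) : MvPolynomial (Fin n) D) ^ 2 * X ⟨1, by omega⟩ ^ 2,
        (X (⟨1, by omega⟩ : Fin n) : MvPolynomial (Fin n) D) ^ 4} =
      Ideal.span {(X (⟨0, by omega⟩ : Fin n) : MvPolynomial (Fin n) D) ^ 2,
          X ⟨0, by omega⟩ * X ⟨1, by omega⟩ + X ⟨1, by omega⟩ ^ 2} *
      Ideal.span {(X (⟨0, by omega⟩ : Fin n) : MvPolynomial (Fin n) D) ^ 2,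
          X ⟨0, by omega⟩ * X ⟨1, by omega⟩ - X ⟨1, by omega⟩ ^ 2}) ∧
    ∃ I J : Ideal (MvPolynomial (Fin n) D),
      Ideal.span {(X (⟨0, by omega⟩ : Fin n) : MvPolynomial (Fin n) D) ^ 4,
        (X (⟨0, by omega⟩ : Fin n) : MvPolynomial (Fin n) D) ^ 3 * X ⟨1, by omega⟩,
        (X (⟨0, by omega⟩ : Fin n) : MvPolynomial (Fin n) D) ^ 2 * X ⟨1, by omega⟩ ^ 2,
        (X (⟨1, by omega⟩ : Fin n) : MvPolynomial (Fin n) D) ^ 4} = I * J ∧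
      I ≠ ⊤ ∧ J ≠ ⊤ := by
  have h2' : IsUnit (2 : MvPolynomial (Fin n) D) := by
    have := h2.map (C : D →+* MvPolynomial (Fin n) D)
    rwa [map_ofNat] at this
  have hkey := c4_key h2' (X (⟨0, by omega⟩ : Fin n) : MvPolynomial (Fin n) D)
    (X (⟨1, by omega⟩ : Fin n))
  refine ⟨hkey, _, _, hkey, ?_, ?_⟩
  · apply c4_span_ne_top
    intro p hp
    simp only [Set.mem_insert_iff, Set.mem_singleton_iff] at hp
    rcases hp with rfl | rfl <;> simp
  · apply c4_span_ne_top
    intro p hp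
    simp only [Set.mem_insert_iff, Set.mem_singleton_iff] at hp
    rcases hp with rfl | rfl <;> simp
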